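/- arXiv:1809.05921 — 4 statements merged into one kernel-verified Lean document; each statement's English description precedes it below -/
import Mathlib

section
/- Let g : ℝ → ℝ be a function that is concave on the interval [0, ∞) and satisfies g(0) = 0, and let μ ≥ 0 be a real number. Then the function x ↦ x·g(μ/x) is monotone non-decreasing on (0, ∞); that is, for all real x₁, x₂ with 0 < x₁ ≤ x₂, x₁·g(μ/x₁) ≤ x₂·g(μ/x₂). -/
/-- If `g` is concave on `[0, ∞)` with `g 0 = 0` and `μ ≥ 0`, then
`x ↦ x * g (μ / x)` is monotone non-decreasing on `(0, ∞)`. -/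
theorem stmt_1 (g : ℝ → ℝ) (hconc : ConcaveOn ℝ (Set.Ici (0 : ℝ)) g)
    (hg0 : g 0 = 0) (μ : ℝ) (hμ : 0 ≤ μ) :
    ∀ x₁ x₂ : ℝ, 0 < x₁ → x₁ ≤ x₂ → x₁ * g (μ / x₁) ≤ x₂ * g (μ / x₂) := by
  intro x₁ x₂ hx₁ hle
  have hx₂ : 0 < x₂ := lt_of_lt_of_le hx₁ hle
  have ha : (0:ℝ) ≤ x₁ / x₂ := by positivity
  have hb : (0:ℝ) ≤ 1 - x₁ / x₂ := by
    have : x₁ / x₂ ≤ 1 := (div_le_one hx₂).2 hle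
    linarith
  have hkey := hconc.2 (x := μ / x₁) (y := 0)
    (by exact Set.mem_Ici.2 (by positivity)) (Set.mem_Ici.2 le_rfl)
    ha hb (by ring)
  simp only [smul_eq_mul, mul_zero, add_zero, hg0] at hkey
  have harg : x₁ / x₂ * (μ / x₁) = μ / x₂ := by
    field_simp
  rw [harg] at hkey
  have := mul_le_mul_of_nonneg_left hkey (le_of_lt hx₂)
  calc x₁ * g (μ / x₁) = x₂ * (x₁ / x₂ * g (μ / x₁)) := by field_simp
    _ ≤ x₂ * g (μ / x₂) := this
end

section
/- Let μ ≥ 0 and q ≥ 0 be real numbers, and let Ī : ℝ → ℝ be concave on the interval [0, q], with Ī(0) = 0 and Ī(r) ≥ 0 for all r ∈ [0, q]. Then the function x ↦ Ī(min(μ/x, q))·x is monotone non-decreasing on (0, ∞); that is, for all real x₁, x₂ with 0 < x₁ ≤ x₂, Ī(min(μ/x₁, q))·x₁ ≤ Ī(min(μ/x₂, q))·x₂. -/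
/-- If `Ī` is concave on `[0, q]`, `Ī 0 = 0` and `Ī ≥ 0` on `[0, q]`, then
`x ↦ Ī (min (μ / x) q) * x` is monotone non-decreasing on `(0, ∞)`. -/
theorem stmt_7 (μ q : ℝ) (hμ : 0 ≤ μ) (hq : 0 ≤ q)
    (Ibar : ℝ → ℝ) (hconc : ConcaveOn ℝ (Set.Icc (0 : ℝ) q) Ibar)
    (h0 : Ibar 0 = 0) (hnonneg : ∀ r ∈ Set.Icc (0 : ℝ) q, 0 ≤ Ibar r) :
    ∀ x₁ x₂ : ℝ, 0 < x₁ → x₁ ≤ x₂ →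
      Ibar (min (μ / x₁) q) * x₁ ≤ Ibar (min (μ / x₂) q) * x₂ := by
  intro x₁ x₂ hx₁ hle
  have hx₂ : 0 < x₂ := lt_of_lt_of_le hx₁ hle
  have key : ∀ t r : ℝ, 0 ≤ t → t ≤ 1 → r ∈ Set.Icc (0:ℝ) q →
      t * Ibar r ≤ Ibar (t * r) := by
    intro t r ht ht1 hr
    have h0m : (0:ℝ) ∈ Set.Icc (0:ℝ) q := ⟨le_refl 0, hq⟩
    have := hconc.2 h0m hr (by linarith : (0:ℝ) ≤ 1 - t) ht (by ring)
    simpa [h0, smul_eq_mul] using this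
  have hdiv : μ / x₂ ≤ μ / x₁ := div_le_div_of_nonneg_left hμ hx₁ hle
  have hμx₂ : 0 ≤ μ / x₂ := div_nonneg hμ hx₂.le
  by_cases h2 : μ / x₂ ≤ q
  · rw [min_eq_left h2]
    by_cases h1 : μ / x₁ ≤ q
    · rw [min_eq_left h1]
      set t := x₁ / x₂ with htdef
      have ht0 : 0 ≤ t := div_nonneg hx₁.le hx₂.le
      have ht1 : t ≤ 1 := (div_le_one hx₂).2 hle
      have hr : μ / x₁ ∈ Set.Icc (0:ℝ) q := ⟨div_nonneg hμ hx₁.le, h1⟩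
      have hk := key t (μ / x₁) ht0 ht1 hr
      have heq : t * (μ / x₁) = μ / x₂ := by
        field_simp [htdef]
        rw [htdef, mul_comm _ μ, mul_assoc, div_mul_cancel₀ _ hx₂.ne']
      rw [heq] at hk
      have := mul_le_mul_of_nonneg_right hk hx₂.le
      calc Ibar (μ / x₁) * x₁ = t * Ibar (μ / x₁) * x₂ := by
            field_simp [htdef]; rw [htdef, mul_assoc, div_mul_cancel₀ _ hx₂.ne', mul_comm x₁]
        _ ≤ Ibar (μ / x₂) * x₂ := this
    · rw [min_eq_right (le_of_not_ge h1)]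
      push_neg at h1
      have hqpos : 0 < q := by
        by_contra hq0
        push_neg at hq0
        have hq0' : q = 0 := le_antisymm hq0 hq
        have : μ / x₂ = 0 := le_antisymm (hq0' ▸ h2) hμx₂
        have hμ0 : μ = 0 := by
          field_simp at this; simpa using this
        rw [hμ0] at h1
        simp at h1
        linarith [hq0', h1]
      set t := μ / (x₂ * q) with htdef
      have ht0 : 0 ≤ t := div_nonneg hμ (by positivity)
      have ht1 : t ≤ 1 := by
        rw [htdef, div_le_one (by positivity)]
        calc μ = (μ / x₂) * x₂ := by field_simp
          _ ≤ q * x₂ := mul_le_mul_of_nonneg_right h2 hx₂.le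
          _ = x₂ * q := by ring
      have hqm : q ∈ Set.Icc (0:ℝ) q := ⟨hq, le_refl q⟩
      have hk := key t q ht0 ht1 hqm
      have heq : t * q = μ / x₂ := by
        field_simp [htdef]; rw [htdef, div_mul_eq_mul_div, div_mul_eq_mul_div, div_eq_iff (by positivity)]; ring
      rw [heq] at hk
      have hIq : 0 ≤ Ibar q := hnonneg q hqm
      have hx₁q : x₁ * q ≤ μ := by
        have := (lt_div_iff₀ hx₁).1 h1
        nlinarith
      calc Ibar q * x₁ ≤ (μ / q) * Ibar q := by
            rw [mul_comm (Ibar q) x₁]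
            exact mul_le_mul_of_nonneg_right ((le_div_iff₀ hqpos).2 hx₁q) hIq
        _ = t * Ibar q * x₂ := by
            field_simp [htdef]; rw [htdef, mul_div_assoc', div_mul_eq_mul_div, eq_div_iff (by positivity)]; ring
        _ ≤ Ibar (μ / x₂) * x₂ := mul_le_mul_of_nonneg_right hk hx₂.le
  · push_neg at h2
    have h1 : q < μ / x₁ := lt_of_lt_of_le h2 hdiv
    rw [min_eq_right h1.le, min_eq_right h2.le]
    exact mul_le_mul_of_nonneg_left hle (hnonneg q ⟨hq, le_refl q⟩)
end

section
/- Let β, μ, Q, q be natural numbers with β ≥ 1 and Q ≥ 1, and let Ī : ℝ → ℝ be concave on the interval [0, q], with Ī(0) = 0 and Ī(r) ≥ 0 for all r ∈ [0, q]. Define a sequence of natural numbers W by W(0) = ⌈β/Q⌉ and W(k+1) = ⌈(β + Ī(min(μ/W(k), q))·W(k))/Q⌉ (ceiling of the real expression, where μ, q, W(k) are viewed as real numbers). Then for every k, W(k) ≥ 1 and W(k) ≤ W(k+1); that is, the iteration is monotone non-decreasing. -/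
lemma stmt_8_key (μ q : ℕ) (Ibar : ℝ → ℝ)
    (hconc : ConcaveOn ℝ (Set.Icc (0 : ℝ) (q : ℝ)) Ibar)
    (h0 : Ibar 0 = 0) (hnonneg : ∀ r ∈ Set.Icc (0 : ℝ) (q : ℝ), 0 ≤ Ibar r)
    {a b : ℝ} (ha : 0 < a) (hab : a ≤ b) :
    Ibar (min ((μ : ℝ) / a) (q : ℝ)) * a ≤ Ibar (min ((μ : ℝ) / b) (q : ℝ)) * b := by
  have hb : 0 < b := lt_of_lt_of_le ha hab
  set r : ℝ := min ((μ : ℝ) / a) (q : ℝ) with hr_def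
  set r' : ℝ := min ((μ : ℝ) / b) (q : ℝ) with hr'_def
  have hr0 : 0 ≤ r := le_min (by positivity) (Nat.cast_nonneg q)
  have hr'0 : 0 ≤ r' := le_min (by positivity) (Nat.cast_nonneg q)
  have hrq : r ≤ (q : ℝ) := min_le_right _ _
  have hr'q : r' ≤ (q : ℝ) := min_le_right _ _
  have hr'r : r' ≤ r := by
    apply min_le_min _ le_rfl
    gcongr
  have hrab : r * a ≤ r' * b := by
    have h1 : r * a = min ((μ : ℝ)) ((q : ℝ) * a) := by
      rw [hr_def, min_mul_of_nonneg _ _ ha.le, div_mul_cancel₀ _ ha.ne']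
    have h2 : r' * b = min ((μ : ℝ)) ((q : ℝ) * b) := by
      rw [hr'_def, min_mul_of_nonneg _ _ hb.le, div_mul_cancel₀ _ hb.ne']
    rw [h1, h2]
    exact min_le_min le_rfl (by gcongr)
  rcases eq_or_lt_of_le hr0 with h | h
  · have hr'z : r' = 0 := le_antisymm (h ▸ hr'r) hr'0
    rw [← h, hr'z, h0, zero_mul, zero_mul]
  · -- 0 < r
    set α : ℝ := r' / r with hα_def
    have hα0 : 0 ≤ α := div_nonneg hr'0 hr0
    have hα1 : α ≤ 1 := (div_le_one h).mpr hr'r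
    have hmem : r ∈ Set.Icc (0 : ℝ) (q : ℝ) := ⟨hr0, hrq⟩
    have h0mem : (0 : ℝ) ∈ Set.Icc (0 : ℝ) (q : ℝ) := ⟨le_refl _, Nat.cast_nonneg q⟩
    have hcc := hconc.2 hmem h0mem hα0 (by linarith : (0:ℝ) ≤ 1 - α) (by ring)
    have hαr : α * r = r' := div_mul_cancel₀ _ h.ne'
    simp only [smul_eq_mul, mul_zero, add_zero, h0] at hcc
    rw [hαr] at hcc
    -- hcc : α * Ibar r + (1 - α) * 0 ≤ Ibar r'
    have hcc' : α * Ibar r ≤ Ibar r' := by linarith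
    have hIr : 0 ≤ Ibar r := hnonneg r hmem
    have hstep : Ibar r * a ≤ (α * Ibar r) * b := by
      have : a ≤ α * b := by
        rw [hα_def, div_mul_eq_mul_div, le_div_iff₀ h]
        linarith [hrab]
      calc Ibar r * a ≤ Ibar r * (α * b) := by
            exact mul_le_mul_of_nonneg_left this hIr
        _ = (α * Ibar r) * b := by ring
    calc Ibar r * a ≤ (α * Ibar r) * b := hstep
      _ ≤ Ibar r' * b := mul_le_mul_of_nonneg_right hcc' hb.le

/-- The fixed-point iteration `W(0) = ⌈β/Q⌉`,
`W(k+1) = ⌈(β + Ī(min(μ/W(k), q)) * W(k)) / Q⌉` is monotone non-decreasing and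
always at least `1`. -/
theorem stmt_8 (β μ Q q : ℕ) (hβ : 1 ≤ β) (hQ : 1 ≤ Q)
    (Ibar : ℝ → ℝ) (hconc : ConcaveOn ℝ (Set.Icc (0 : ℝ) (q : ℝ)) Ibar)
    (h0 : Ibar 0 = 0) (hnonneg : ∀ r ∈ Set.Icc (0 : ℝ) (q : ℝ), 0 ≤ Ibar r)
    (W : ℕ → ℕ) (hW0 : W 0 = ⌈(β : ℝ) / (Q : ℝ)⌉₊)
    (hWk : ∀ k : ℕ,
      W (k + 1) =
        ⌈((β : ℝ) + Ibar (min ((μ : ℝ) / (W k : ℝ)) (q : ℝ)) * (W k : ℝ)) / (Q : ℝ)⌉₊) :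
    ∀ k : ℕ, 1 ≤ W k ∧ W k ≤ W (k + 1) := by
  have hQ0 : (0 : ℝ) < (Q : ℝ) := by exact_mod_cast hQ
  have hβ0 : (0 : ℝ) < (β : ℝ) := by exact_mod_cast hβ
  have hW1 : 1 ≤ W 0 := by
    rw [hW0, Nat.one_le_ceil_iff]
    positivity
  -- nonnegativity of the memory term for any positive W k
  have hg : ∀ k : ℕ, 1 ≤ W k →
      0 ≤ Ibar (min ((μ : ℝ) / (W k : ℝ)) (q : ℝ)) * (W k : ℝ) := by
    intro k hk
    have hWk0 : (0 : ℝ) < (W k : ℝ) := by exact_mod_cast hk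
    have hmem : min ((μ : ℝ) / (W k : ℝ)) (q : ℝ) ∈ Set.Icc (0 : ℝ) (q : ℝ) :=
      ⟨le_min (by positivity) (Nat.cast_nonneg q), min_le_right _ _⟩
    exact mul_nonneg (hnonneg _ hmem) hWk0.le
  intro k
  induction k with
  | zero =>
    refine ⟨hW1, ?_⟩
    rw [hW0, hWk 0]
    apply Nat.ceil_le_ceil
    apply div_le_div_of_nonneg_right _ hQ0.le
    linarith [hg 0 hW1]
  | succ n ih =>
    obtain ⟨h1, h2⟩ := ih
    have h1' : 1 ≤ W (n + 1) := le_trans h1 h2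
    refine ⟨h1', ?_⟩
    rw [hWk n, hWk (n + 1)]
    apply Nat.ceil_le_ceil
    apply div_le_div_of_nonneg_right _ hQ0.le
    have ha : (0 : ℝ) < (W n : ℝ) := by exact_mod_cast h1
    have hab : (W n : ℝ) ≤ (W (n + 1) : ℝ) := by exact_mod_cast h2
    linarith [stmt_8_key μ q Ibar hconc h0 hnonneg ha hab]
end

section
/- Let N be a natural number and for each j ∈ {1, …, N} let q_j be a natural number and Ī_j : ℝ → ℝ a function that is concave on the interval [0, q_j], with Ī_j(0) = 0 and Ī_j(r) ≥ 0 for all r ∈ [0, q_j]. Let W, W' : {1, …, N} → ℕ satisfy W_j ≤ W'_j for every j, and let ν : {1, …, N} → ℕ satisfy ν_j ≤ W_j·q_j for every j. Then ∑_{j=1}^{N} Ī_j(ν_j/W_j)·W_j ≤ ∑_{j=1}^{N} Ī_j(ν_j/W'_j)·W'_j, where a summand is interpreted as 0 whenever the corresponding span W_j (respectively W'_j) is 0 (in which case necessarily ν_j = 0). -/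
/-- Enlarging the per-interval spans while keeping the memory assignment cannot
decrease the total stall `∑ Ī_j(ν_j / W_j) * W_j` (a summand being `0` whenever
the corresponding span is `0`, which holds automatically since `ν_j / 0 = 0` in
Lean and the summand is multiplied by the span). -/
theorem stmt_11 (N : ℕ) (q : ℕ → ℕ) (Ibar : ℕ → ℝ → ℝ)
    (hconc : ∀ j < N, ConcaveOn ℝ (Set.Icc (0 : ℝ) (q j : ℝ)) (Ibar j))
    (h0 : ∀ j < N, Ibar j 0 = 0)
    (hnonneg : ∀ j < N, ∀ r ∈ Set.Icc (0 : ℝ) (q j : ℝ), 0 ≤ Ibar j r)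
    (W W' ν : ℕ → ℕ)
    (hWW' : ∀ j < N, W j ≤ W' j)
    (hν : ∀ j < N, ν j ≤ W j * q j) :
    ∑ j ∈ Finset.range N, Ibar j ((ν j : ℝ) / (W j : ℝ)) * (W j : ℝ) ≤
      ∑ j ∈ Finset.range N, Ibar j ((ν j : ℝ) / (W' j : ℝ)) * (W' j : ℝ) := by
  apply Finset.sum_le_sum
  intro j hj
  rw [Finset.mem_range] at hj
  rcases Nat.eq_zero_or_pos (W j) with hW0 | hWpos
  · -- W j = 0, so ν j = 0
    have hν0 : ν j = 0 := by have := hν j hj; rw [hW0] at this; simpa using this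
    rw [hW0, hν0]
    simp only [Nat.cast_zero, mul_zero, zero_div]
    rw [h0 j hj]
    simp
  · have hW'pos : 0 < W' j := lt_of_lt_of_le hWpos (hWW' j hj)
    have hWr : (0 : ℝ) < (W j : ℝ) := by exact_mod_cast hWpos
    have hW'r : (0 : ℝ) < (W' j : ℝ) := by exact_mod_cast hW'pos
    set x : ℝ := (ν j : ℝ) / (W j : ℝ) with hxdef
    have hx_mem : x ∈ Set.Icc (0 : ℝ) (q j : ℝ) := by
      constructor
      · positivity
      · rw [div_le_iff₀ hWr]
        have : (ν j : ℝ) ≤ (W j : ℝ) * (q j : ℝ) := by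
          exact_mod_cast hν j hj
        linarith
    have h0_mem : (0 : ℝ) ∈ Set.Icc (0 : ℝ) (q j : ℝ) := by
      constructor <;> positivity
    set α : ℝ := (W j : ℝ) / (W' j : ℝ) with hαdef
    have hα0 : 0 ≤ α := by positivity
    have hα1 : α ≤ 1 := by
      rw [hαdef, div_le_one hW'r]
      exact_mod_cast hWW' j hj
    have hsum : (1 - α) + α = 1 := by ring
    have hcomb := (hconc j hj).2 h0_mem hx_mem (by linarith : (0:ℝ) ≤ 1 - α) hα0 hsum
    rw [h0 j hj] at hcomb
    have hkey : (1 - α) • (0:ℝ) + α • x = (ν j : ℝ) / (W' j : ℝ) := by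
      rw [smul_eq_mul, smul_eq_mul, hxdef, hαdef]
      field_simp
      ring
    rw [hkey] at hcomb
    -- hcomb : (1-α) * 0 + α * Ibar j x ≤ Ibar j (ν/W')
    have : α * Ibar j x ≤ Ibar j ((ν j : ℝ) / (W' j : ℝ)) := by
      simpa using hcomb
    calc Ibar j x * (W j : ℝ) = (α * Ibar j x) * (W' j : ℝ) := by
          rw [hαdef]; field_simp
      _ ≤ Ibar j ((ν j : ℝ) / (W' j : ℝ)) * (W' j : ℝ) := by
          apply mul_le_mul_of_nonneg_right this (le_of_lt hW'r)
end
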